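/- arXiv:1503.04300 — 4 statements merged into one kernel-verified Lean document; each statement's English description precedes it below -/
import Mathlib

section
/- Let A be a continuous linear map from ℝ^n to ℝ^k with n ≥ k. Then inf over unit functionals φ of ‖A* φ‖ equals inf of ‖A v‖ over unit vectors v orthogonal to ker A (with the convention that the latter infimum is taken over the orthogonal complement of the kernel intersected with the unit sphere, and equals 0 if A is not surjective). -/
open Classical
open scoped RealInnerProductSpace

/-- The Rabier function `ν(A) = inf_{‖φ‖=1} ‖A*φ‖`, where `A*` is the adjoint. -/
noncomputable def rabier {n k : ℕ}
    (A : EuclideanSpace ℝ (Fin n) →L[ℝ] EuclideanSpace ℝ (Fin k)) : ℝ :=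
  sInf {r : ℝ | ∃ φ : EuclideanSpace ℝ (Fin k), ‖φ‖ = 1 ∧
    r = ‖ContinuousLinearMap.adjoint A φ‖}

set_option maxHeartbeats 1000000 in
/-- For a linear map `A : ℝ^n → ℝ^k` with `n ≥ k`, the Rabier function equals the infimum of
`‖A v‖` over unit vectors `v` orthogonal to `ker A` when `A` is surjective, and equals `0`
when `A` is not surjective. -/
theorem rabier_eq_inf_on_orthogonal_of_ker (n k : ℕ) (hnk : n ≥ k)
    (A : EuclideanSpace ℝ (Fin n) →L[ℝ] EuclideanSpace ℝ (Fin k)) :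
    rabier A =
      if Function.Surjective A then
        sInf {r : ℝ | ∃ v : EuclideanSpace ℝ (Fin n),
          v ∈ (LinearMap.ker (A : EuclideanSpace ℝ (Fin n) →ₗ[ℝ] EuclideanSpace ℝ (Fin k)))ᗮ ∧ ‖v‖ = 1 ∧ r = ‖A v‖}
      else 0 := by
  set A' := ContinuousLinearMap.adjoint A with hA'
  by_cases hsurj : Function.Surjective A
  · rw [if_pos hsurj]
    rcases Nat.eq_zero_or_pos k with hk | hk
    · -- trivial case k = 0 : both sets are empty
      subst hk
      have h1 : {r : ℝ | ∃ φ : EuclideanSpace ℝ (Fin 0), ‖φ‖ = 1 ∧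
          r = ‖ContinuousLinearMap.adjoint A φ‖} = ∅ := by
        ext r
        simp only [Set.mem_setOf_eq, Set.mem_empty_iff_false, iff_false, not_exists]
        rintro φ ⟨hφ, -⟩
        rw [Subsingleton.elim φ 0, norm_zero] at hφ
        exact one_ne_zero hφ.symm
      have h2 : {r : ℝ | ∃ v : EuclideanSpace ℝ (Fin n),
          v ∈ (LinearMap.ker (A : EuclideanSpace ℝ (Fin n) →ₗ[ℝ] EuclideanSpace ℝ (Fin 0)))ᗮ ∧ ‖v‖ = 1 ∧ r = ‖A v‖} = ∅ := by
        ext r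
        simp only [Set.mem_setOf_eq, Set.mem_empty_iff_false, iff_false, not_exists]
        rintro v ⟨hv, hvn, -⟩
        have hvker : v ∈ LinearMap.ker (A : EuclideanSpace ℝ (Fin n) →ₗ[ℝ] EuclideanSpace ℝ (Fin 0)) := by
          rw [LinearMap.mem_ker]
          exact Subsingleton.elim _ _
        have : (inner ℝ v v : ℝ) = 0 := (Submodule.mem_orthogonal _ _).mp hv v hvker
        rw [real_inner_self_eq_norm_sq, hvn] at this
        norm_num at this
      rw [rabier, h1, h2]
    · -- main case k ≥ 1
      -- the unit sphere in ℝ^k is nonempty and compact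
      have hone : ‖(EuclideanSpace.single (⟨0, hk⟩ : Fin k) (1 : ℝ))‖ = 1 := by
        rw [EuclideanSpace.norm_single]; norm_num
      have hne : (Metric.sphere (0 : EuclideanSpace ℝ (Fin k)) 1).Nonempty :=
        ⟨_, mem_sphere_zero_iff_norm.mpr hone⟩
      obtain ⟨φ₀, hφ₀mem, hmin⟩ := (isCompact_sphere (0 : EuclideanSpace ℝ (Fin k)) 1).exists_isMinOn
        hne (A'.continuous.norm).continuousOn
      have hφ₀norm : ‖φ₀‖ = 1 := mem_sphere_zero_iff_norm.mp hφ₀mem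
      set m := ‖A' φ₀‖ with hm
      -- m > 0 since A' is injective (A surjective)
      have hA'inj : ∀ ψ : EuclideanSpace ℝ (Fin k), A' ψ = 0 → ψ = 0 := by
        intro ψ h
        obtain ⟨x, hx⟩ := hsurj ψ
        have h2 : (inner ℝ ψ ψ : ℝ) = inner ℝ (A' ψ) x := by
          rw [hA', ContinuousLinearMap.adjoint_inner_left, hx]
        rw [← inner_self_eq_zero (𝕜 := ℝ), h2, h, inner_zero_left]
      have hφ₀ne : φ₀ ≠ 0 := fun h => by rw [h, norm_zero] at hφ₀norm; exact one_ne_zero hφ₀norm.symm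
      have hmpos : 0 < m := by
        rcases (norm_nonneg (A' φ₀)).lt_or_eq with h | h
        · exact h
        · exact absurd (hA'inj φ₀ (norm_eq_zero.mp h.symm)) hφ₀ne
      -- B = A ∘ A* is self-adjoint
      set B := A ∘L A' with hB
      have hBsa : IsSelfAdjoint B := by
        rw [ContinuousLinearMap.isSelfAdjoint_iff', hB, hA', ContinuousLinearMap.adjoint_comp,
          ContinuousLinearMap.adjoint_adjoint]
      have hre : ∀ x : EuclideanSpace ℝ (Fin k), B.reApplyInnerSelf x = ‖A' x‖ ^ 2 := by
        intro x
        rw [ContinuousLinearMap.reApplyInnerSelf_apply, hB, ContinuousLinearMap.comp_apply,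
          ← ContinuousLinearMap.adjoint_inner_right, ← hA', real_inner_self_eq_norm_sq]
        simp
      -- φ₀ minimizes the Rayleigh quotient on the sphere
      have hmin' : IsMinOn B.reApplyInnerSelf (Metric.sphere (0 : EuclideanSpace ℝ (Fin k)) ‖φ₀‖)
          φ₀ := by
        rw [hφ₀norm]
        intro φ hφ
        simp only [Set.mem_setOf_eq, hre]
        have := hmin hφ
        simp only [Set.mem_setOf_eq] at this
        have h0 : (0:ℝ) ≤ ‖A' φ₀‖ := norm_nonneg _
        nlinarith [norm_nonneg (A' φ)]
      -- hence it is an eigenvector of B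
      have hev := hBsa.hasEigenvector_of_isMinOn hφ₀ne hmin'
      obtain ⟨μ, hμ⟩ : ∃ μ : ℝ, B φ₀ = μ • φ₀ := ⟨_, hev.apply_eq_smul⟩
      have hμval : μ = m ^ 2 := by
        have h1 : (inner ℝ (B φ₀) φ₀ : ℝ) = μ := by
          rw [hμ, real_inner_smul_left, real_inner_self_eq_norm_sq, hφ₀norm]; ring
        have h2 : (inner ℝ (B φ₀) φ₀ : ℝ) = m ^ 2 := by
          rw [hB, ContinuousLinearMap.comp_apply, ← ContinuousLinearMap.adjoint_inner_right,
            ← hA', real_inner_self_eq_norm_sq, hm]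
        rw [← h1, h2]
      have hBφ₀ : ‖B φ₀‖ = m ^ 2 := by
        rw [hμ, norm_smul, hφ₀norm, mul_one, hμval, Real.norm_eq_abs, abs_of_nonneg (sq_nonneg m)]
      -- the witness vector v
      set v := m⁻¹ • (A' φ₀) with hv
      have hvnorm : ‖v‖ = 1 := by
        rw [hv, norm_smul, Real.norm_eq_abs, abs_of_nonneg (inv_nonneg.mpr hmpos.le), ← hm,
          inv_mul_cancel₀ hmpos.ne']
      have hA'mem : ∀ ψ : EuclideanSpace ℝ (Fin k), A' ψ ∈ (LinearMap.ker (A : EuclideanSpace ℝ (Fin n) →ₗ[ℝ] EuclideanSpace ℝ (Fin k)))ᗮ := by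
        intro ψ
        rw [Submodule.mem_orthogonal]
        intro u hu
        rw [hA', ContinuousLinearMap.adjoint_inner_right, show A u = 0 from LinearMap.mem_ker.mp hu,
          inner_zero_left]
      have hvmem : v ∈ (LinearMap.ker (A : EuclideanSpace ℝ (Fin n) →ₗ[ℝ] EuclideanSpace ℝ (Fin k)))ᗮ := Submodule.smul_mem _ _ (hA'mem φ₀)
      have hAv : ‖A v‖ = m := by
        have : A v = m⁻¹ • (B φ₀) := by
          rw [hv, map_smul, hB, ContinuousLinearMap.comp_apply]
        rw [this, norm_smul, hBφ₀, Real.norm_eq_abs, abs_of_nonneg (inv_nonneg.mpr hmpos.le)]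
        field_simp
      -- (ker A)ᗮ = range A'
      have hker : LinearMap.ker (A : EuclideanSpace ℝ (Fin n) →ₗ[ℝ] EuclideanSpace ℝ (Fin k)) = (LinearMap.range (A' : EuclideanSpace ℝ (Fin k) →ₗ[ℝ] EuclideanSpace ℝ (Fin n)))ᗮ := by
        ext x
        simp only [LinearMap.mem_ker, Submodule.mem_orthogonal]
        constructor
        · rintro hx u ⟨ψ, rfl⟩
          rw [real_inner_comm, hA', ContinuousLinearMap.coe_coe, ContinuousLinearMap.adjoint_inner_right]
          simp only [ContinuousLinearMap.coe_coe] at hx ⊢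
          rw [hx, inner_zero_left]
        · intro h
          rw [← inner_self_eq_zero (𝕜 := ℝ)]
          have := h (A' (A x)) ⟨A x, rfl⟩
          rwa [hA', ContinuousLinearMap.adjoint_inner_left] at this
      have hker_orth : (LinearMap.ker (A : EuclideanSpace ℝ (Fin n) →ₗ[ℝ] EuclideanSpace ℝ (Fin k)))ᗮ = LinearMap.range (A' : EuclideanSpace ℝ (Fin k) →ₗ[ℝ] EuclideanSpace ℝ (Fin n)) := by
        rw [hker, Submodule.orthogonal_orthogonal]
      -- lower bound for the right-hand set
      have hlb2 : ∀ w : EuclideanSpace ℝ (Fin n), w ∈ (LinearMap.ker (A : EuclideanSpace ℝ (Fin n) →ₗ[ℝ] EuclideanSpace ℝ (Fin k)))ᗮ → ‖w‖ = 1 →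
          m ≤ ‖A w‖ := by
        intro w hw hwn
        rw [hker_orth] at hw
        obtain ⟨ψ, hψ⟩ := hw
        simp only [ContinuousLinearMap.coe_coe] at hψ
        have hψne : ψ ≠ 0 := by
          rintro rfl
          rw [map_zero] at hψ
          rw [← hψ, norm_zero] at hwn
          exact one_ne_zero hwn.symm
        have hψpos : 0 < ‖ψ‖ := norm_pos_iff.mpr hψne
        -- m * ‖ψ‖ ≤ 1
        have h1 : m * ‖ψ‖ ≤ 1 := by
          have hs : (‖ψ‖⁻¹ • ψ) ∈ Metric.sphere (0 : EuclideanSpace ℝ (Fin k)) 1 := by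
            rw [mem_sphere_zero_iff_norm, norm_smul, Real.norm_eq_abs,
              abs_of_nonneg (inv_nonneg.mpr hψpos.le), inv_mul_cancel₀ hψpos.ne']
          have := hmin hs
          simp only [Set.mem_setOf_eq, map_smul, norm_smul, Real.norm_eq_abs,
            abs_of_nonneg (inv_nonneg.mpr hψpos.le)] at this
          rw [hψ, hwn, mul_one] at this
          calc m * ‖ψ‖ ≤ ‖ψ‖⁻¹ * ‖ψ‖ := by nlinarith
          _ = 1 := inv_mul_cancel₀ hψpos.ne'
        -- 1 ≤ ‖ψ‖ * ‖A w‖ by Cauchy-Schwarz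
        have h2 : (1:ℝ) ≤ ‖ψ‖ * ‖A w‖ := by
          have hcs : (inner ℝ ψ (A w) : ℝ) ≤ ‖ψ‖ * ‖A w‖ := real_inner_le_norm ψ (A w)
          have : (inner ℝ ψ (A w) : ℝ) = 1 := by
            rw [← hψ, hA', ← ContinuousLinearMap.adjoint_inner_left,
              real_inner_self_eq_norm_sq, ← hA', hψ, hwn]; norm_num
          linarith
        nlinarith [norm_nonneg (A w)]
      -- conclude: both infima equal m
      have hS1 : rabier A = m := by
        rw [rabier]
        refine IsLeast.csInf_eq ⟨⟨φ₀, hφ₀norm, rfl⟩, ?_⟩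
        rintro r ⟨φ, hφn, rfl⟩
        exact hmin (mem_sphere_zero_iff_norm.mpr hφn)
      have hS2 : sInf {r : ℝ | ∃ v : EuclideanSpace ℝ (Fin n),
          v ∈ (LinearMap.ker (A : EuclideanSpace ℝ (Fin n) →ₗ[ℝ] EuclideanSpace ℝ (Fin k)))ᗮ ∧ ‖v‖ = 1 ∧ r = ‖A v‖} = m := by
        refine IsLeast.csInf_eq ⟨⟨v, hvmem, hvnorm, hAv.symm⟩, ?_⟩
        rintro r ⟨w, hw, hwn, rfl⟩
        exact hlb2 w hw hwn
      rw [hS1, hS2]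
  · -- A not surjective : rabier A = 0
    rw [if_neg hsurj]
    have hrange : LinearMap.range (A : EuclideanSpace ℝ (Fin n) →ₗ[ℝ] EuclideanSpace ℝ (Fin k)) ≠ ⊤ := by
      rwa [Ne, LinearMap.range_eq_top]
    have horth : (LinearMap.range (A : EuclideanSpace ℝ (Fin n) →ₗ[ℝ] EuclideanSpace ℝ (Fin k)))ᗮ ≠ ⊥ := by
      rwa [Ne, Submodule.orthogonal_eq_bot_iff]
    obtain ⟨φ, hφmem, hφne⟩ := Submodule.exists_mem_ne_zero_of_ne_bot horth
    have hφpos : 0 < ‖φ‖ := norm_pos_iff.mpr hφne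
    set ψ := ‖φ‖⁻¹ • φ with hψ
    have hψn : ‖ψ‖ = 1 := by
      rw [hψ, norm_smul, Real.norm_eq_abs, abs_of_nonneg (inv_nonneg.mpr hφpos.le),
        inv_mul_cancel₀ hφpos.ne']
    have hψmem : ψ ∈ (LinearMap.range (A : EuclideanSpace ℝ (Fin n) →ₗ[ℝ] EuclideanSpace ℝ (Fin k)))ᗮ := Submodule.smul_mem _ _ hφmem
    have hAψ : A' ψ = 0 := by
      rw [← inner_self_eq_zero (𝕜 := ℝ), hA', ContinuousLinearMap.adjoint_inner_left]
      exact real_inner_comm ψ _ ▸ (Submodule.mem_orthogonal _ _).mp hψmem _ ⟨_, rfl⟩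
    have h0 : (0:ℝ) ∈ {r : ℝ | ∃ φ : EuclideanSpace ℝ (Fin k), ‖φ‖ = 1 ∧
        r = ‖ContinuousLinearMap.adjoint A φ‖} := ⟨ψ, hψn, by rw [← hA', hAψ, norm_zero]⟩
    rw [rabier]
    refine le_antisymm (csInf_le ⟨0, ?_⟩ h0) (le_csInf ⟨0, h0⟩ ?_)
    · rintro r ⟨φ', -, rfl⟩
      exact norm_nonneg _
    · rintro r ⟨φ', -, rfl⟩
      exact norm_nonneg _
end

section
/- Let X ⊆ ℝ^n be the graph of a C-Lipschitz function ξ : B → ℝ on B ⊆ ℝ^{n-1}, C a natural number, let z > 0, and let M be a real number with M ≥ 4(C+1). Then for every a ∈ ℝ^n there exists b in the closed ball of center a and radius M²·z such that the open ball of center b and radius M·z is disjoint from X. -/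
/-- The projection `ℝ^{n+1} → ℝ^n` forgetting the last coordinate. -/
noncomputable def projFirst (n : ℕ) (p : EuclideanSpace ℝ (Fin (n + 1))) :
    EuclideanSpace ℝ (Fin n) :=
  WithLp.toLp 2 (fun i => p i.castSucc)

lemma coord_le_dist {n : ℕ} (p q : EuclideanSpace ℝ (Fin n)) (i : Fin n) :
    |p i - q i| ≤ dist p q := by
  rw [EuclideanSpace.dist_eq]
  have h1 : |p i - q i| = Real.sqrt (dist (p i) (q i) ^ 2) := by
    rw [Real.sqrt_sq (by positivity), Real.dist_eq]
  rw [h1]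
  apply Real.sqrt_le_sqrt
  exact Finset.single_le_sum (f := fun j => dist (p j) (q j) ^ 2)
    (fun j _ => by positivity) (Finset.mem_univ i)

lemma proj_le_dist {n : ℕ} (p q : EuclideanSpace ℝ (Fin (n+1))) :
    dist (projFirst n p) (projFirst n q) ≤ dist p q := by
  rw [EuclideanSpace.dist_eq, EuclideanSpace.dist_eq]
  apply Real.sqrt_le_sqrt
  rw [Fin.sum_univ_castSucc]
  have h : ∑ i : Fin n, dist (projFirst n p i) (projFirst n q i) ^ 2
      = ∑ i : Fin n, dist (p i.castSucc) (q i.castSucc) ^ 2 := rfl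
  rw [h]
  have : (0:ℝ) ≤ dist (p (Fin.last n)) (q (Fin.last n)) ^ 2 := by positivity
  linarith

/-- If `X ⊆ ℝ^{n+1}` is the graph of a `C`-Lipschitz function (`C ∈ ℕ`), `z > 0` and
`M ≥ 4(C+1)`, then for every `a` there is `b` in the closed ball of center `a` and radius
`M²·z` such that the open ball of center `b` and radius `M·z` is disjoint from `X`. -/
theorem exists_ball_disjoint_graph (n : ℕ) (C : ℕ) (z M : ℝ) (hz : 0 < z)
    (hM : M ≥ 4 * ((C : ℝ) + 1))
    (B : Set (EuclideanSpace ℝ (Fin n))) (ξ : EuclideanSpace ℝ (Fin n) → ℝ)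
    (hξ : ∀ x ∈ B, ∀ y ∈ B, |ξ x - ξ y| ≤ (C : ℝ) * ‖x - y‖)
    (X : Set (EuclideanSpace ℝ (Fin (n + 1))))
    (hX : X = {p | projFirst n p ∈ B ∧ p (Fin.last n) = ξ (projFirst n p)})
    (a : EuclideanSpace ℝ (Fin (n + 1))) :
    ∃ b ∈ Metric.closedBall a (M ^ 2 * z), Metric.ball b (M * z) ∩ X = ∅ := by
  have hC0 : (0:ℝ) ≤ (C:ℝ) := Nat.cast_nonneg C
  have hM4 : (4:ℝ) ≤ M := by linarith
  have hMpos : (0 : ℝ) < M := by linarith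
  set v : EuclideanSpace ℝ (Fin (n+1)) := EuclideanSpace.single (Fin.last n) (M^2 * z)
  have hvlast : v (Fin.last n) = M^2 * z := by
    simp [v, EuclideanSpace.single_apply]
  have hdist : ∀ s : ℝ, |s| = 1 → dist (a + s • v) a = M^2 * z := by
    intro s hs
    rw [dist_eq_norm, add_sub_cancel_left, norm_smul, Real.norm_eq_abs, hs, one_mul]
    have hv : ‖v‖ = ‖M^2*z‖ := EuclideanSpace.norm_single _ _
    rw [hv, Real.norm_eq_abs, abs_of_pos (by positivity)]
  -- main dichotomy
  by_cases h1 : Metric.ball (a + v) (M * z) ∩ X = ∅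
  · exact ⟨a + v, by
      rw [Metric.mem_closedBall]
      have := hdist 1 (by norm_num)
      simpa using this.le, h1⟩
  · refine ⟨a + (-1 : ℝ) • v, by
      rw [Metric.mem_closedBall, hdist (-1) (by norm_num)], ?_⟩
    rw [Set.eq_empty_iff_forall_notMem]
    rintro q ⟨hq, hqX⟩
    obtain ⟨p, hp, hpX⟩ := Set.nonempty_iff_ne_empty.2 h1
    rw [hX] at hpX hqX
    obtain ⟨hpB, hpval⟩ := hpX
    obtain ⟨hqB, hqval⟩ := hqX
    rw [Metric.mem_ball] at hp hq
    -- horizontal bounds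
    have hap : dist (projFirst n p) (projFirst n (a+v)) < M*z :=
      lt_of_le_of_lt (proj_le_dist _ _) hp
    have haq : dist (projFirst n q) (projFirst n (a + (-1:ℝ)•v)) < M*z :=
      lt_of_le_of_lt (proj_le_dist _ _) hq
    have hprojsame : projFirst n (a+v) = projFirst n (a + (-1:ℝ)•v) := by
      ext i
      show (a + v) i.castSucc = (a + (-1:ℝ)•v) i.castSucc
      have : v i.castSucc = 0 := by
        simp [v, EuclideanSpace.single_apply, Fin.castSucc_lt_last i,
          (Fin.castSucc_lt_last i).ne]
      simp [this]
    have hpq : dist (projFirst n p) (projFirst n q) < 2*(M*z) := by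
      calc dist (projFirst n p) (projFirst n q)
          ≤ dist (projFirst n p) (projFirst n (a+v)) +
            dist (projFirst n q) (projFirst n (a+v)) := dist_triangle_right _ _ _
        _ < M*z + M*z := by rw [hprojsame] at hap ⊢; linarith [haq]
        _ = 2*(M*z) := by ring
    -- vertical bounds
    have hplast : |p (Fin.last n) - (a+v) (Fin.last n)| < M*z :=
      lt_of_le_of_lt (coord_le_dist _ _ _) hp
    have hqlast : |q (Fin.last n) - (a + (-1:ℝ)•v) (Fin.last n)| < M*z :=
      lt_of_le_of_lt (coord_le_dist _ _ _) hq
    have havp : (a+v) (Fin.last n) = a (Fin.last n) + M^2*z := by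
      show a (Fin.last n) + v (Fin.last n) = _
      rw [hvlast]
    have havq : (a + (-1:ℝ)•v) (Fin.last n) = a (Fin.last n) - M^2*z := by
      show a (Fin.last n) + ((-1:ℝ)•v) (Fin.last n) = _
      have : ((-1:ℝ)•v) (Fin.last n) = -(M^2*z) := by
        show (-1:ℝ) * v (Fin.last n) = _
        rw [hvlast]; ring
      rw [this]; ring
    rw [havp] at hplast
    rw [havq] at hqlast
    rw [abs_lt] at hplast hqlast
    have hlip := hξ _ hpB _ hqB
    rw [← hpval, ← hqval] at hlip
    have hnd : ‖projFirst n p - projFirst n q‖ = dist (projFirst n p) (projFirst n q) :=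
      (dist_eq_norm _ _).symm
    rw [hnd] at hlip
    have hlip2 : p (Fin.last n) - q (Fin.last n) ≤ (C:ℝ) * (2*(M*z)) := by
      calc p (Fin.last n) - q (Fin.last n) ≤ |p (Fin.last n) - q (Fin.last n)| := le_abs_self _
        _ ≤ (C:ℝ) * dist (projFirst n p) (projFirst n q) := hlip
        _ ≤ (C:ℝ) * (2*(M*z)) := by
            apply mul_le_mul_of_nonneg_left hpq.le hC0
    -- but vertically the gap is large
    have hgap : p (Fin.last n) - q (Fin.last n) > 2*M^2*z - 2*M*z := by linarith
    nlinarith [mul_pos hMpos hz, sq_nonneg M]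
end

section
/- Let Γ be a C¹ submanifold of ℝ^{n+k}, x ∈ Γ, and let π : ℝ^{n+k} → ℝ^k be the projection onto the last k coordinates. Let w be a unit vector in T_xΓ maximizing ‖π(w)‖ over unit vectors of T_xΓ, let b = ‖π(w)‖, and assume b > 0 and ‖e_k − π(w)/‖π(w)‖‖ < ε for the last canonical basis vector e_k of ℝ^k, with 0 < ε < 1. Let Δ_x = {u ∈ T_xΓ : ⟨u, e_{n+k}⟩ = 0} where e_{n+k} is the last canonical basis vector of ℝ^{n+k}. Then d(w, Δ_x) ≥ 1 − ε. -/
/-- Distance bound for the maximizing tangent direction. Here `ℝ^{n+(k+1)}` is modelled as the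
`ℓ²` product `ℝ^n × ℝ^{k+1}`, `π` is the projection onto the last `k+1` coordinates, `T` is the
tangent space `T_xΓ` of the `C¹` submanifold `Γ` at `x`, `w ∈ T` is a unit vector maximizing
`‖π w‖`, and `Δ_x` consists of the tangent vectors whose last coordinate vanishes. If
`‖e_k − π w/‖π w‖‖ < ε`, then `d(w, Δ_x) ≥ 1 − ε`. -/
theorem dist_to_Delta_ge (n k : ℕ) (ε : ℝ) (hε0 : 0 < ε) (hε1 : ε < 1)
    (T : Submodule ℝ (WithLp 2 (EuclideanSpace ℝ (Fin n) × EuclideanSpace ℝ (Fin (k + 1)))))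
    (w : WithLp 2 (EuclideanSpace ℝ (Fin n) × EuclideanSpace ℝ (Fin (k + 1))))
    (hwT : w ∈ T) (hw : ‖w‖ = 1)
    (hmax : ∀ u ∈ T, ‖u‖ = 1 → ‖(WithLp.equiv 2 _ u).2‖ ≤ ‖(WithLp.equiv 2 _ w).2‖)
    (hb : 0 < ‖(WithLp.equiv 2 _ w).2‖)
    (hclose : ‖EuclideanSpace.single (Fin.last k) (1 : ℝ) -
      ‖(WithLp.equiv 2 _ w).2‖⁻¹ • (WithLp.equiv 2 _ w).2‖ < ε) :
    ∀ u ∈ T, (WithLp.equiv 2 _ u).2 (Fin.last k) = 0 → 1 - ε ≤ ‖w - u‖ := by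
  intro u huT hu0
  simp only [WithLp.equiv_apply, WithLp.ofLp_snd] at hmax hb hclose hu0
  set b : ℝ := ‖w.snd‖ with hbdef
  -- Step A: ‖v.snd‖ ≤ b * ‖v‖ for v ∈ T
  have hbound : ∀ v ∈ T, ‖(v : WithLp 2 (EuclideanSpace ℝ (Fin n) × EuclideanSpace ℝ (Fin (k + 1)))).snd‖ ≤ b * ‖v‖ := by
    intro v hv
    rcases eq_or_ne v 0 with rfl | hvne
    · simp
    · have hnv : (0 : ℝ) < ‖v‖ := norm_pos_iff.mpr hvne
      have h1 : ‖(‖v‖⁻¹ • v)‖ = 1 := by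
        rw [norm_smul, norm_inv, norm_norm, inv_mul_cancel₀ hnv.ne']
      have h2 := hmax (‖v‖⁻¹ • v) (T.smul_mem _ hv) h1
      rw [WithLp.smul_snd, norm_smul, norm_inv, norm_norm] at h2
      have := (div_le_iff₀ hnv).mp (by simpa [div_eq_inv_mul] using h2)
      linarith
  -- Step B: the eigen-identity
  have key : ∀ v ∈ T, inner ℝ w.snd (v : WithLp 2 (EuclideanSpace ℝ (Fin n) × EuclideanSpace ℝ (Fin (k + 1)))).snd
      = b ^ 2 * (inner ℝ w v : ℝ) := by
    intro v hv
    set A : ℝ := (inner ℝ w.snd v.snd : ℝ) - b ^ 2 * inner ℝ w v with hA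
    set C : ℝ := b ^ 2 * ‖v‖ ^ 2 - ‖v.snd‖ ^ 2 with hC
    have hCnn : 0 ≤ C := by
      have := hbound v hv
      have h2 : ‖v.snd‖ ^ 2 ≤ (b * ‖v‖) ^ 2 := by
        apply pow_le_pow_left₀ (norm_nonneg _) this
      nlinarith [this]
    have hineq : ∀ t : ℝ, 2 * t * A ≤ t ^ 2 * C := by
      intro t
      have hmem : w + t • v ∈ T := T.add_mem hwT (T.smul_mem _ hv)
      have h1 := hbound _ hmem
      have h1' : ‖(w + t • v).snd‖ ^ 2 ≤ (b * ‖w + t • v‖) ^ 2 :=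
        pow_le_pow_left₀ (norm_nonneg _) h1 2
      have e1 : ‖(w + t • v).snd‖ ^ 2 = ‖w.snd‖ ^ 2 + 2 * t * (inner ℝ w.snd v.snd : ℝ) + t ^ 2 * ‖v.snd‖ ^ 2 := by
        rw [WithLp.add_snd, WithLp.smul_snd]
        rw [norm_add_sq_real, norm_smul, inner_smul_right, mul_pow]
        simp [Real.norm_eq_abs, sq_abs]
        ring
      have e2 : ‖w + t • v‖ ^ 2 = ‖w‖ ^ 2 + 2 * t * (inner ℝ w v : ℝ) + t ^ 2 * ‖v‖ ^ 2 := by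
        rw [norm_add_sq_real, norm_smul, inner_smul_right, mul_pow]
        simp [Real.norm_eq_abs, sq_abs]
        ring
      rw [e1, mul_pow, e2, hw] at h1'
      have hb2 : ‖w.snd‖ ^ 2 = b ^ 2 := by rw [hbdef]
      rw [hA, hC]
      nlinarith [h1', hb2]
    have hA0 : A = 0 := by
      by_contra h
      have ht := hineq (A / (C + 1))
      have hC1 : (0:ℝ) < C + 1 := by linarith
      rw [div_pow] at ht
      have h2 : 2 * (A / (C + 1)) * A = 2 * A ^ 2 / (C + 1) := by ring
      have := (div_le_div_iff₀ hC1 (by positivity : (0:ℝ) < (C+1)^2)).mp (by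
        rw [h2] at ht
        calc 2 * A ^ 2 / (C + 1) ≤ A ^ 2 / (C + 1) ^ 2 * C := ht
        _ = A ^ 2 * C / (C + 1) ^ 2 := by ring)
      have hA2 : 0 < A ^ 2 := by positivity
      nlinarith
    have := hA0
    rw [hA] at this
    linarith
  -- Step C: |⟪w,u⟫| ≤ ε ‖u‖
  have hinner : |(inner ℝ w u : ℝ)| ≤ ε * ‖u‖ := by
    have hkey := key u huT
    have hsplit : (inner ℝ w.snd u.snd : ℝ)
        = inner ℝ (w.snd - b • EuclideanSpace.single (Fin.last k) (1:ℝ)) u.snd := by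
      rw [inner_sub_left, inner_smul_left]
      have : (inner ℝ (EuclideanSpace.single (Fin.last k) (1:ℝ)) u.snd : ℝ) = u.snd (Fin.last k) := by
        rw [EuclideanSpace.inner_single_left]; simp
      rw [this, hu0]
      simp
    have hnorm1 : ‖w.snd - b • EuclideanSpace.single (Fin.last k) (1:ℝ)‖ ≤ b * ε := by
      have : w.snd - b • EuclideanSpace.single (Fin.last k) (1:ℝ)
          = -(b • (EuclideanSpace.single (Fin.last k) (1:ℝ) - b⁻¹ • w.snd)) := by
        rw [smul_sub, smul_smul, mul_inv_cancel₀ hb.ne', one_smul]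
        abel
      rw [this, norm_neg, norm_smul, Real.norm_eq_abs, abs_of_pos hb]
      exact mul_le_mul_of_nonneg_left hclose.le hb.le
    have hcs : |(inner ℝ w.snd u.snd : ℝ)| ≤ (b * ε) * (b * ‖u‖) := by
      rw [hsplit]
      calc |(inner ℝ (w.snd - b • EuclideanSpace.single (Fin.last k) (1:ℝ)) u.snd : ℝ)|
          ≤ ‖w.snd - b • EuclideanSpace.single (Fin.last k) (1:ℝ)‖ * ‖u.snd‖ := abs_real_inner_le_norm _ _
        _ ≤ (b * ε) * (b * ‖u‖) := by
            apply mul_le_mul hnorm1 (hbound u huT) (norm_nonneg _)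
            positivity
    rw [hkey, abs_mul, abs_of_pos (by positivity : (0:ℝ) < b ^ 2)] at hcs
    calc |(inner ℝ w u : ℝ)| = b ^ 2 * |(inner ℝ w u : ℝ)| / b ^ 2 := by field_simp
      _ ≤ (b * ε) * (b * ‖u‖) / b ^ 2 := by
          apply div_le_div_of_nonneg_right ?_ (by positivity)
          · linarith [hcs]
      _ = ε * ‖u‖ := by field_simp
  -- Step D
  have hsq : (1 - ε) ^ 2 ≤ ‖w - u‖ ^ 2 := by
    rw [norm_sub_sq_real, hw]
    have h1 : (inner ℝ w u : ℝ) ≤ ε * ‖u‖ := le_of_abs_le hinner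
    nlinarith [norm_nonneg u, sq_nonneg (‖u‖ - ε), mul_nonneg hε0.le (by linarith : (0:ℝ) ≤ 1 - ε)]
  have h1ε : (0:ℝ) ≤ 1 - ε := by linarith
  nlinarith [norm_nonneg (w - u), hsq]
end

section
/- Let v ∈ ℝ^k be a unit vector with ‖e_k − v‖ < ε where e_k is the last canonical basis vector and 0 < ε < 1/4. Let π₂ : ℝ^k → e_k^⊥ be the linear projection onto e_k^⊥ along the line spanned by v. Then the operator norm of π₂ is at most 2. -/
open scoped RealInnerProductSpace


/-- Let `v ∈ ℝ^{k+1}` be a unit vector with `‖e_k − v‖ < ε`, `0 < ε < 1/4`, where `e_k` is the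
last canonical basis vector. Then the projection `π₂` onto `e_kᗮ` along `span v` has norm at
most `2`: whenever `y = y' + t • v` with the last coordinate of `y'` vanishing,
`‖y'‖ ≤ 2‖y‖`. -/
theorem proj_along_v_norm_le_two (k : ℕ) (ε : ℝ) (hε0 : 0 < ε) (hε : ε < 1 / 4)
    (v : EuclideanSpace ℝ (Fin (k + 1))) (hv : ‖v‖ = 1)
    (hclose : ‖EuclideanSpace.single (Fin.last k) (1 : ℝ) - v‖ < ε) :
    ∀ (y y' : EuclideanSpace ℝ (Fin (k + 1))) (t : ℝ),
      y = y' + t • v → y' (Fin.last k) = 0 → ‖y'‖ ≤ 2 * ‖y‖ := by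
  intro y y' t hy hy'
  set ek : EuclideanSpace ℝ (Fin (k + 1)) := EuclideanSpace.single (Fin.last k) (1 : ℝ) with hek
  have hekn : ‖ek‖ = 1 := by simp [hek, EuclideanSpace.norm_single]
  -- coordinate bound: |x i| ≤ ‖x‖
  have coord_le : ∀ x : EuclideanSpace ℝ (Fin (k + 1)), |x (Fin.last k)| ≤ ‖x‖ := by
    intro x
    have h1 : (inner ℝ x ek : ℝ) = x (Fin.last k) := by
      simp [hek, EuclideanSpace.inner_single_right]
    have h2 : |(inner ℝ x ek : ℝ)| ≤ ‖x‖ * ‖ek‖ := abs_real_inner_le_norm x ek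
    rw [h1, hekn, mul_one] at h2
    exact h2
  -- v's last coordinate is ≥ 3/4
  have hvk : (3 : ℝ) / 4 ≤ v (Fin.last k) := by
    have h := coord_le (ek - v)
    have hco : (ek - v) (Fin.last k) = 1 - v (Fin.last k) := by
      simp [hek]
    rw [hco] at h
    have := lt_of_le_of_lt h hclose
    have := abs_lt.mp (lt_trans this hε)
    linarith [this.1, this.2]
  -- last coordinate of y
  have hyk : y (Fin.last k) = t * v (Fin.last k) := by
    rw [hy]; simp [hy']
  -- bound on |t|
  have ht : |t| ≤ 4 / 3 * ‖y‖ := by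
    have h1 : |y (Fin.last k)| ≤ ‖y‖ := coord_le y
    rw [hyk, abs_mul] at h1
    have hvk' : (3 : ℝ) / 4 ≤ |v (Fin.last k)| := le_trans hvk (le_abs_self _)
    nlinarith [abs_nonneg t, abs_nonneg (v (Fin.last k)), norm_nonneg y]
  -- ‖y - t • ek‖ ≤ ‖y‖
  have h1 : ‖y - t • ek‖ ≤ ‖y‖ := by
    have hsq := norm_sub_sq_real y (t • ek)
    have hin : (inner ℝ y (t • ek) : ℝ) = t * y (Fin.last k) := by
      rw [real_inner_smul_right]
      simp [hek, EuclideanSpace.inner_single_right]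
    have hns : ‖t • ek‖ = |t| := by
      rw [norm_smul, hekn, mul_one, Real.norm_eq_abs]
    rw [hin, hns, hyk] at hsq
    have hsq' : ‖y - t • ek‖ ^ 2 ≤ ‖y‖ ^ 2 := by
      rw [hsq]
      have : |t| ^ 2 = t ^ 2 := sq_abs t
      nlinarith [sq_nonneg t]
    nlinarith [norm_nonneg (y - t • ek), norm_nonneg y]
  -- put it together
  have hdecomp : y' = (y - t • ek) - t • (v - ek) := by
    rw [hy]; simp only [smul_sub]; abel
  have h2 : ‖y'‖ ≤ ‖y - t • ek‖ + |t| * ‖v - ek‖ := by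
    rw [hdecomp]
    calc ‖(y - t • ek) - t • (v - ek)‖ ≤ ‖y - t • ek‖ + ‖t • (v - ek)‖ := norm_sub_le _ _
      _ = ‖y - t • ek‖ + |t| * ‖v - ek‖ := by rw [norm_smul, Real.norm_eq_abs]
  have h3 : ‖v - ek‖ < ε := by rwa [norm_sub_rev]
  have h4 : |t| * ‖v - ek‖ ≤ 4 / 3 * ‖y‖ * ε := by
    have := mul_le_mul ht (le_of_lt h3) (norm_nonneg _) (by positivity)
    linarith
  nlinarith [norm_nonneg y]
end
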